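/- Fix n ∈ ℕ. The map ψ̂ₙ that sends a decomposed semimetric (r,v) on [n] (r a pseudometric on [n], v ∈ ℝ≥0ⁿ) to the isomorphy class of the marked metric measure space ([n]/∼, r, n⁻¹ Σᵢ δ_{([i],v(i))}) — where ∼ identifies points at r-distance zero — is continuous with respect to the Euclidean topology on (r,v) and the marked Gromov-weak topology; more precisely, the Prohorov distance between the marked distance matrix distributions of ψ̂ₙ(r,v) and ψ̂ₙ(r',v') is at most max over i,j ∈ [n] of max(|r(i,j)−r'(i,j)|, |v(i)−v'(i)|). -/

import Mathlib

open MeasureTheory ProbabilityTheory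
open scoped ENNReal

/-- The Prohorov distance of two measures with respect to a distance function `d`. -/
noncomputable def prohorovDist {α : Type*} [MeasurableSpace α]
    (d : α → α → ℝ) (μ ν : Measure α) : ℝ :=
  sInf {ε : ℝ | 0 < ε ∧
    (∀ F : Set α, μ F ≤ ν {y | ∃ x ∈ F, d x y < ε} + ENNReal.ofReal ε) ∧
    (∀ F : Set α, ν F ≤ μ {y | ∃ x ∈ F, d x y < ε} + ENNReal.ofReal ε)}

/-- The metric on the space of marked distance matrices:
`d((r,v),(r',v')) = sup_k min (max_{i,j ≤ k} max |r(i,j)−r'(i,j)| |v(i)−v'(i)|) 2^{−k}`. -/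
noncomputable def mdmDist (y y' : (ℕ → ℕ → ℝ) × (ℕ → ℝ)) : ℝ :=
  ⨆ k : ℕ, min
    ((Finset.range (k + 1)).sup' Finset.nonempty_range_add_one fun i =>
      (Finset.range (k + 1)).sup' Finset.nonempty_range_add_one fun j =>
        max |y.1 i j - y'.1 i j| |y.2 i - y'.2 i|)
    ((2 : ℝ)⁻¹ ^ k)

namespace StmtAux

abbrev Mdm := (ℕ → ℕ → ℝ) × (ℕ → ℝ)

noncomputable def A (k : ℕ) (y y' : Mdm) : ℝ :=
  (Finset.range (k + 1)).sup' Finset.nonempty_range_add_one fun i =>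
    (Finset.range (k + 1)).sup' Finset.nonempty_range_add_one fun j =>
      max |y.1 i j - y'.1 i j| |y.2 i - y'.2 i|

lemma mdm_eq (y y' : Mdm) : mdmDist y y' = ⨆ k : ℕ, min (A k y y') ((2:ℝ)⁻¹ ^ k) := rfl

lemma A_nonneg (k : ℕ) (y y' : Mdm) : 0 ≤ A k y y' := by
  refine le_trans ?_ (Finset.le_sup' _ (Finset.self_mem_range_succ k))
  refine le_trans ?_ (Finset.le_sup' _ (Finset.self_mem_range_succ k))
  positivity

lemma A_mono {k K : ℕ} (h : k ≤ K) (y y' : Mdm) : A k y y' ≤ A K y y' := by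
  unfold A
  refine Finset.sup'_le _ _ fun i hi => Finset.sup'_le _ _ fun j hj => ?_
  have hi' : i ∈ Finset.range (K + 1) := by
    simp only [Finset.mem_range] at hi ⊢; omega
  have hj' : j ∈ Finset.range (K + 1) := by
    simp only [Finset.mem_range] at hj ⊢; omega
  exact Finset.le_sup'_of_le _ hi' (Finset.le_sup'_of_le _ hj' le_rfl)

lemma A_tri (k : ℕ) (x y z : Mdm) : A k x z ≤ A k x y + A k y z := by
  unfold A
  refine Finset.sup'_le _ _ fun i hi => Finset.sup'_le _ _ fun j hj => ?_
  have h1 : max |x.1 i j - y.1 i j| |x.2 i - y.2 i| ≤ A k x y :=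
    Finset.le_sup'_of_le _ hi (Finset.le_sup'_of_le _ hj le_rfl)
  have h2 : max |y.1 i j - z.1 i j| |y.2 i - z.2 i| ≤ A k y z :=
    Finset.le_sup'_of_le _ hi (Finset.le_sup'_of_le _ hj le_rfl)
  refine max_le ?_ ?_
  · exact (abs_sub_le _ _ _).trans
      (add_le_add ((le_max_left _ _).trans h1) ((le_max_left _ _).trans h2))
  · exact (abs_sub_le _ _ _).trans
      (add_le_add ((le_max_right _ _).trans h1) ((le_max_right _ _).trans h2))

lemma mdm_bdd (y y' : Mdm) :
    BddAbove (Set.range fun k : ℕ => min (A k y y') ((2:ℝ)⁻¹ ^ k)) := by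
  refine ⟨1, ?_⟩
  rintro _ ⟨k, rfl⟩
  exact (min_le_right _ _).trans (pow_le_one₀ (by norm_num) (by norm_num))

lemma mdm_tri (x y z : Mdm) : mdmDist x z ≤ mdmDist x y + mdmDist y z := by
  rw [mdm_eq, mdm_eq, mdm_eq]
  refine ciSup_le fun k => ?_
  have hc : (0:ℝ) ≤ (2:ℝ)⁻¹ ^ k := by positivity
  have key : min (A k x z) ((2:ℝ)⁻¹ ^ k) ≤
      min (A k x y) ((2:ℝ)⁻¹ ^ k) + min (A k y z) ((2:ℝ)⁻¹ ^ k) := by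
    rcases le_total (A k x y) ((2:ℝ)⁻¹ ^ k) with h1 | h1
    · rcases le_total (A k y z) ((2:ℝ)⁻¹ ^ k) with h2 | h2
      · rw [min_eq_left h1, min_eq_left h2]
        exact (min_le_left _ _).trans (A_tri k x y z)
      · rw [min_eq_right h2]
        have h3 : 0 ≤ min (A k x y) ((2:ℝ)⁻¹ ^ k) := le_min (A_nonneg _ _ _) hc
        linarith [min_le_right (A k x z) ((2:ℝ)⁻¹ ^ k)]
    · rw [min_eq_right h1]
      have h3 : 0 ≤ min (A k y z) ((2:ℝ)⁻¹ ^ k) := le_min (A_nonneg _ _ _) hc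
      linarith [min_le_right (A k x z) ((2:ℝ)⁻¹ ^ k)]
  exact key.trans (add_le_add (le_ciSup (mdm_bdd x y) k) (le_ciSup (mdm_bdd y z) k))

lemma mdm_self (y : Mdm) : mdmDist y y ≤ 0 := by
  rw [mdm_eq]
  refine ciSup_le fun k => (min_le_left _ _).trans ?_
  refine Finset.sup'_le _ _ fun i _ => Finset.sup'_le _ _ fun j _ => by simp

lemma mdm_comm (y y' : Mdm) : mdmDist y y' = mdmDist y' y := by
  simp only [mdmDist, abs_sub_comm]

lemma mdm_le_max (K : ℕ) (y y' : Mdm) :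
    mdmDist y y' ≤ max (A K y y') ((2:ℝ)⁻¹ ^ K) := by
  rw [mdm_eq]
  refine ciSup_le fun k => ?_
  rcases le_total k K with h | h
  · exact (min_le_left _ _).trans ((A_mono h y y').trans (le_max_left _ _))
  · exact (min_le_right _ _).trans
      ((pow_le_pow_of_le_one (by norm_num) (by norm_num) h).trans (le_max_right _ _))

lemma isOpen_ball (x : Mdm) (δ : ℝ) : IsOpen {y : Mdm | mdmDist x y < δ} := by
  rw [isOpen_iff_mem_nhds]
  intro y hy
  simp only [Set.mem_setOf_eq] at hy
  set c : ℝ := δ - mdmDist x y with hcdef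
  have hc0 : 0 < c := by simp only [hcdef]; linarith
  obtain ⟨K, hK⟩ := exists_pow_lt_of_lt_one hc0 (by norm_num : (2:ℝ)⁻¹ < 1)
  set S : Set Mdm := ⋂ i ∈ Finset.range (K+1), ⋂ j ∈ Finset.range (K+1),
    ({y' : Mdm | |y.1 i j - y'.1 i j| < c} ∩ {y' : Mdm | |y.2 i - y'.2 i| < c}) with hS
  have hSopen : IsOpen S := by
    refine isOpen_biInter_finset fun i _ => isOpen_biInter_finset fun j _ => ?_
    have c1 : Continuous fun y' : Mdm => y'.1 i j :=
      (continuous_apply j).comp ((continuous_apply i).comp continuous_fst)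
    have c2 : Continuous fun y' : Mdm => y'.2 i :=
      (continuous_apply i).comp continuous_snd
    exact (isOpen_lt (continuous_const.sub c1).abs continuous_const).inter
      (isOpen_lt (continuous_const.sub c2).abs continuous_const)
  have hyS : y ∈ S := by
    simp only [hS, Set.mem_iInter, Set.mem_inter_iff, Set.mem_setOf_eq]
    intro i _ j _
    simpa using hc0
  refine mem_nhds_iff.2 ⟨S, ?_, hSopen, hyS⟩
  intro y' hy'
  simp only [hS, Set.mem_iInter, Set.mem_inter_iff, Set.mem_setOf_eq] at hy'
  have hA : A K y y' < c := by
    rw [A, Finset.sup'_lt_iff]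
    intro i hi
    rw [Finset.sup'_lt_iff]
    intro j hj
    exact max_lt (hy' i hi j hj).1 (hy' i hi j hj).2
  have h1 : mdmDist y y' < c := lt_of_le_of_lt (mdm_le_max K y y') (max_lt hA hK)
  have h2 : mdmDist x y' ≤ mdmDist x y + mdmDist y y' := mdm_tri x y y'
  simp only [Set.mem_setOf_eq]
  simp only [hcdef] at h1
  linarith

lemma half {Ω : Type*} [MeasurableSpace Ω] (μ : Measure Ω) (g g' : Ω → Mdm)
    (hg : Measurable g) (hg' : Measurable g') {M ε : ℝ} (hMε : M < ε)
    (hd : ∀ ω, mdmDist (g ω) (g' ω) ≤ M) (F : Set Mdm) :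
    Measure.map g μ F ≤
      Measure.map g' μ {y | ∃ x ∈ F, mdmDist x y < ε} + ENNReal.ofReal ε := by
  set δ := ε - M with hδdef
  have hδ0 : 0 < δ := by simp only [hδdef]; linarith
  set G : Set Mdm := ⋃ x ∈ F, {y | mdmDist x y < δ} with hG
  have hGopen : IsOpen G := isOpen_biUnion fun x _ => isOpen_ball x δ
  have hFG : F ⊆ G := fun x hx =>
    Set.mem_biUnion hx (by simpa using lt_of_le_of_lt (mdm_self x) hδ0)
  have h2 : g ⁻¹' G ⊆ g' ⁻¹' {y | ∃ x ∈ F, mdmDist x y < ε} := by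
    intro ω hω
    simp only [hG, Set.mem_preimage, Set.mem_iUnion, Set.mem_setOf_eq] at hω ⊢
    obtain ⟨x, hxF, hxd⟩ := hω
    refine ⟨x, hxF, ?_⟩
    have := mdm_tri x (g ω) (g' ω)
    have := hd ω
    simp only [hδdef] at hxd
    linarith
  calc Measure.map g μ F ≤ Measure.map g μ G := measure_mono hFG
    _ = μ (g ⁻¹' G) := Measure.map_apply hg hGopen.measurableSet
    _ ≤ μ (g' ⁻¹' {y | ∃ x ∈ F, mdmDist x y < ε}) := measure_mono h2
    _ ≤ Measure.map g' μ {y | ∃ x ∈ F, mdmDist x y < ε} :=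
        Measure.le_map_apply hg'.aemeasurable _
    _ ≤ _ := le_self_add

end StmtAux

open StmtAux in
/-- The map `ψ̂ₙ` is continuous: the Prohorov distance between the marked distance matrix
distributions of `ψ̂ₙ(r,v)` and `ψ̂ₙ(r',v')` (laws of the matrices sampled along an i.i.d.
uniform sequence of indices of `[n]`) is bounded by
`max_{i,j} max (|r(i,j)−r'(i,j)|) (|v(i)−v'(i)|)`. -/
theorem stmt12 {n : ℕ} [NeZero n]
    {Ω : Type*} [MeasurableSpace Ω] (μ : Measure Ω) [IsProbabilityMeasure μ]
    (r r' : Fin n → Fin n → ℝ) (v v' : Fin n → ℝ)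
    (hr : (∀ i, r i i = 0) ∧ (∀ i j, 0 ≤ r i j) ∧ (∀ i j, r i j = r j i) ∧
      ∀ i j k, r i k ≤ r i j + r j k)
    (hr' : (∀ i, r' i i = 0) ∧ (∀ i j, 0 ≤ r' i j) ∧ (∀ i j, r' i j = r' j i) ∧
      ∀ i j k, r' i k ≤ r' i j + r' j k)
    (hv : ∀ i, 0 ≤ v i) (hv' : ∀ i, 0 ≤ v' i)
    (f : ℕ → Ω → Fin n) (hf : ∀ i, Measurable (f i))
    (hiid : iIndepFun f μ)
    (hlaw : ∀ i, Measure.map (f i) μ = (PMF.uniformOfFintype (Fin n)).toMeasure) :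
    prohorovDist mdmDist
      (Measure.map (fun ω =>
        ((fun i j => r (f i ω) (f j ω), fun i => v (f i ω)) : (ℕ → ℕ → ℝ) × (ℕ → ℝ))) μ)
      (Measure.map (fun ω =>
        ((fun i j => r' (f i ω) (f j ω), fun i => v' (f i ω)) : (ℕ → ℕ → ℝ) × (ℕ → ℝ))) μ)
    ≤ Finset.univ.sup' Finset.univ_nonempty fun i : Fin n =>
        Finset.univ.sup' Finset.univ_nonempty fun j : Fin n =>
          max |r i j - r' i j| |v i - v' i| := by
  classical
  set M : ℝ := Finset.univ.sup' Finset.univ_nonempty fun i : Fin n =>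
      Finset.univ.sup' Finset.univ_nonempty fun j : Fin n =>
        max |r i j - r' i j| |v i - v' i| with hMdef
  set g : Ω → Mdm := fun ω =>
    (fun i j => r (f i ω) (f j ω), fun i => v (f i ω)) with hgdef
  set g' : Ω → Mdm := fun ω =>
    (fun i j => r' (f i ω) (f j ω), fun i => v' (f i ω)) with hg'def
  have hφmeas : ∀ (R : Fin n → Fin n → ℝ) (V : Fin n → ℝ), Measurable fun ω =>
      ((fun i j => R (f i ω) (f j ω), fun i => V (f i ω)) : Mdm) := by
    intro R V
    refine Measurable.prod ?_ ?_
    · refine measurable_pi_lambda _ fun i => measurable_pi_lambda _ fun j => ?_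
      exact (measurable_of_countable fun p : Fin n × Fin n => R p.1 p.2).comp
        ((hf i).prodMk (hf j))
    · exact measurable_pi_lambda _ fun i => (measurable_of_countable V).comp (hf i)
  have hg : Measurable g := hφmeas r v
  have hg' : Measurable g' := hφmeas r' v'
  have hM0 : 0 ≤ M := by
    refine le_trans ?_ (Finset.le_sup'_of_le _ (Finset.mem_univ (0 : Fin n))
      (Finset.le_sup'_of_le _ (Finset.mem_univ (0 : Fin n)) le_rfl))
    positivity
  have hd : ∀ ω, mdmDist (g ω) (g' ω) ≤ M := by
    intro ω
    rw [mdm_eq]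
    refine ciSup_le fun k => (min_le_left _ _).trans ?_
    refine Finset.sup'_le _ _ fun i _ => Finset.sup'_le _ _ fun j _ => ?_
    exact Finset.le_sup'_of_le _ (Finset.mem_univ (f i ω))
      (Finset.le_sup'_of_le _ (Finset.mem_univ (f j ω)) le_rfl)
  have hd' : ∀ ω, mdmDist (g' ω) (g ω) ≤ M := fun ω => (mdm_comm (g' ω) (g ω)) ▸ hd ω
  have hbdd : BddBelow {ε : ℝ | 0 < ε ∧
      (∀ F : Set Mdm, Measure.map g μ F ≤
        Measure.map g' μ {y | ∃ x ∈ F, mdmDist x y < ε} + ENNReal.ofReal ε) ∧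
      (∀ F : Set Mdm, Measure.map g' μ F ≤
        Measure.map g μ {y | ∃ x ∈ F, mdmDist x y < ε} + ENNReal.ofReal ε)} :=
    ⟨0, fun x hx => hx.1.le⟩
  have key : ∀ ε : ℝ, M < ε → ε ∈ {ε : ℝ | 0 < ε ∧
      (∀ F : Set Mdm, Measure.map g μ F ≤
        Measure.map g' μ {y | ∃ x ∈ F, mdmDist x y < ε} + ENNReal.ofReal ε) ∧
      (∀ F : Set Mdm, Measure.map g' μ F ≤
        Measure.map g μ {y | ∃ x ∈ F, mdmDist x y < ε} + ENNReal.ofReal ε)} := by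
    intro ε hε
    exact ⟨lt_of_le_of_lt hM0 hε,
      fun F => half μ g g' hg hg' hε hd F,
      fun F => half μ g' g hg' hg hε hd' F⟩
  rw [prohorovDist]
  refine le_of_forall_pos_le_add fun δ hδ => ?_
  exact csInf_le hbdd (key (M + δ) (by linarith))
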